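/- arXiv:1911.06350 — 4 statements merged into one kernel-verified Lean document; each statement's English description precedes it below -/
import Mathlib

section
/- Let Σ be a d×d symmetric positive definite matrix, b ∈ ℝ^d with at least one positive component, and let b̃ be the unique solution to min_{x ≥ b} x^⊤ Σ^{-1} x. Set w = Σ^{-1} b̃. Then w ∈ [0,∞)^d, w^⊤ b = b̃^⊤ Σ^{-1} b̃ > 0, and (w^⊤ b)^2 / (w^⊤ Σ w) = min_{x ≥ b} x^⊤ Σ^{-1} x; in particular the supremum of (z^⊤ b)^2/(z^⊤ Σ z) over z ∈ [0,∞)^d with z^⊤ b > 0 is attained at z = w and equals min_{x ≥ b} x^⊤ Σ^{-1} x. -/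
open Matrix

/-- Symmetry of the quadratic form for a symmetric matrix. -/
private lemma dot_symm_aux {d : ℕ} (A : Matrix (Fin d) (Fin d) ℝ) (hA : Aᵀ = A)
    (x y : Fin d → ℝ) : x ⬝ᵥ (A *ᵥ y) = y ⬝ᵥ (A *ᵥ x) := by
  rw [Matrix.dotProduct_mulVec, ← hA, Matrix.vecMul_transpose, hA, dotProduct_comm]

/-- Properties of the dual solution `w = Σ⁻¹ b̃` of the quadratic program `Π_Σ(b)`:
`w ≥ 0`, `wᵀ b = b̃ᵀ Σ⁻¹ b̃ > 0`, and `(wᵀ b)²/(wᵀ Σ w)` equals the minimal value,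
so the supremum of `(zᵀ b)²/(zᵀ Σ z)` over nonnegative `z` with `zᵀ b > 0` is
attained at `z = w`. -/
theorem stmt_3 (d : ℕ) (S : Matrix (Fin d) (Fin d) ℝ)
    (hS : S.PosDef) (hsymm : S.IsSymm) (b : Fin d → ℝ) (hb : ∃ i, 0 < b i)
    (btil : Fin d → ℝ) (hbtil : (∀ i, b i ≤ btil i) ∧
      ∀ y : Fin d → ℝ, (∀ i, b i ≤ y i) →
        btil ⬝ᵥ (S⁻¹ *ᵥ btil) ≤ y ⬝ᵥ (S⁻¹ *ᵥ y))
    (w : Fin d → ℝ) (hw : w = S⁻¹ *ᵥ btil) :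
    (∀ i, 0 ≤ w i) ∧
    w ⬝ᵥ b = btil ⬝ᵥ (S⁻¹ *ᵥ btil) ∧
    0 < btil ⬝ᵥ (S⁻¹ *ᵥ btil) ∧
    (w ⬝ᵥ b) ^ 2 / (w ⬝ᵥ (S *ᵥ w)) = btil ⬝ᵥ (S⁻¹ *ᵥ btil) ∧
    (∀ z : Fin d → ℝ, (∀ i, 0 ≤ z i) → 0 < z ⬝ᵥ b →
      (z ⬝ᵥ b) ^ 2 / (z ⬝ᵥ (S *ᵥ z)) ≤ (w ⬝ᵥ b) ^ 2 / (w ⬝ᵥ (S *ᵥ w))) := by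
  obtain ⟨hfeas, hmin⟩ := hbtil
  set A := S⁻¹ with hAdef
  have hApd : A.PosDef := hS.inv
  have hAsymm : Aᵀ = A := by
    rw [hAdef, Matrix.transpose_nonsing_inv, hsymm.eq]
  have hsd := dot_symm_aux A hAsymm
  have hSsymm : Sᵀ = S := hsymm.eq
  have hsdS := dot_symm_aux S hSsymm
  -- Expansion of the quadratic form
  have expand : ∀ x v : Fin d → ℝ, (x + v) ⬝ᵥ (A *ᵥ (x + v)) =
      x ⬝ᵥ (A *ᵥ x) + 2 * (v ⬝ᵥ (A *ᵥ x)) + v ⬝ᵥ (A *ᵥ v) := by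
    intro x v
    rw [Matrix.mulVec_add, dotProduct_add, add_dotProduct,
      add_dotProduct, hsd x v]
    ring
  -- diagonal entries of A are positive
  have hdiag : ∀ i : Fin d, 0 < A i i := by
    intro i
    have h := hApd.dotProduct_mulVec_pos (x := Pi.single i 1) (by
      intro h
      have := congrFun h i
      simp at this)
    have he : (Pi.single i 1 : Fin d → ℝ) ⬝ᵥ (A *ᵥ Pi.single i 1) = A i i := by
      rw [Matrix.mulVec_single, single_dotProduct]
      simp
    simpa [he] using h
  -- value of perturbation in direction t • eᵢ
  have pert : ∀ (i : Fin d) (t : ℝ),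
      (btil + Pi.single i t) ⬝ᵥ (A *ᵥ (btil + Pi.single i t)) =
      btil ⬝ᵥ (A *ᵥ btil) + 2 * (t * w i) + t * (A i i * t) := by
    intro i t
    rw [expand, single_dotProduct, Matrix.mulVec_single, single_dotProduct, hw]
    simp
  -- nonnegativity of w
  have hwnn : ∀ i, 0 ≤ w i := by
    intro i
    by_contra hneg
    push_neg at hneg
    set t : ℝ := -w i / A i i with ht
    have htpos : 0 < t := div_pos (by linarith) (hdiag i)
    have hfe : ∀ j, b j ≤ (btil + (Pi.single i t : Fin d → ℝ)) j := by
      intro j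
      rcases eq_or_ne j i with rfl | hji
      · simp only [Pi.add_apply, Pi.single_eq_same]
        have := hfeas j; linarith
      · simp only [Pi.add_apply, Pi.single_eq_of_ne hji]
        simpa using hfeas j
    have hle := hmin _ hfe
    rw [pert i t] at hle
    have hAi := hdiag i
    have htval : A i i * t = -w i := by
      rw [ht]; field_simp
    rw [htval] at hle
    nlinarith
  -- complementary slackness: w ⬝ᵥ btil = w ⬝ᵥ b
  have hcs : ∀ i, w i * (btil i - b i) = 0 := by
    intro i
    rcases eq_or_lt_of_le (hwnn i) with h0 | hpos
    · rw [← h0]; ring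
    rcases eq_or_lt_of_le (hfeas i) with h0 | hgt
    · rw [← h0]; ring
    exfalso
    set δ : ℝ := btil i - b i with hδ
    have hδpos : 0 < δ := by linarith
    set t : ℝ := min δ (w i / A i i) with ht
    have hAi := hdiag i
    have htpos : 0 < t := lt_min hδpos (div_pos hpos hAi)
    have htδ : t ≤ δ := min_le_left _ _
    have htw : t * A i i ≤ w i := by
      have := min_le_right δ (w i / A i i)
      calc t * A i i ≤ (w i / A i i) * A i i := by nlinarith
        _ = w i := by field_simp
    have hfe : ∀ j, b j ≤ (btil + (Pi.single i (-t) : Fin d → ℝ)) j := by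
      intro j
      rcases eq_or_ne j i with rfl | hji
      · simp only [Pi.add_apply, Pi.single_eq_same]
        linarith
      · simp only [Pi.add_apply, Pi.single_eq_of_ne hji]
        simpa using hfeas j
    have hle := hmin _ hfe
    rw [pert i (-t)] at hle
    nlinarith
  have hwbtil : w ⬝ᵥ btil = w ⬝ᵥ b := by
    have h0 : w ⬝ᵥ (btil - b) = 0 := by
      simp only [dotProduct, Pi.sub_apply]
      exact Finset.sum_eq_zero fun i _ => hcs i
    rw [dotProduct_sub] at h0
    linarith
  -- w ⬝ᵥ b = btil ⬝ᵥ A btil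
  have hwb : w ⬝ᵥ b = btil ⬝ᵥ (A *ᵥ btil) := by
    rw [← hwbtil, hw, dotProduct_comm, hsd btil]
  -- positivity
  have hbtilne : btil ≠ 0 := by
    obtain ⟨i, hi⟩ := hb
    intro h
    have := hfeas i
    rw [h] at this
    simp at this
    linarith
  have hVpos : 0 < btil ⬝ᵥ (A *ᵥ btil) := by simpa using hApd.dotProduct_mulVec_pos hbtilne
  -- S *ᵥ w = btil
  have hSw : S *ᵥ w = btil := by
    rw [hw, hAdef, Matrix.mulVec_mulVec, Matrix.mul_nonsing_inv _ (isUnit_iff_ne_zero.mpr hS.det_pos.ne'),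
      Matrix.one_mulVec]
  have hwSw : w ⬝ᵥ (S *ᵥ w) = btil ⬝ᵥ (A *ᵥ btil) := by
    rw [hSw, hwbtil, hwb]
  have hratio : (w ⬝ᵥ b) ^ 2 / (w ⬝ᵥ (S *ᵥ w)) = btil ⬝ᵥ (A *ᵥ btil) := by
    rw [hwSw, hwb]
    field_simp
  refine ⟨hwnn, hwb, hVpos, hratio, ?_⟩
  intro z hznn hzb
  rw [hratio]
  have hzne : z ≠ 0 := by
    intro h; rw [h] at hzb; simp at hzb
  have hzSz : 0 < z ⬝ᵥ (S *ᵥ z) := by simpa using hS.dotProduct_mulVec_pos hzne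
  -- z ⬝ᵥ b ≤ z ⬝ᵥ btil
  have hzbtil : z ⬝ᵥ b ≤ z ⬝ᵥ btil := by
    apply Finset.sum_le_sum
    intro i _
    exact mul_le_mul_of_nonneg_left (hfeas i) (hznn i)
  -- Cauchy–Schwarz : (z ⬝ᵥ S w)² ≤ (z ⬝ᵥ S z)(w ⬝ᵥ S w)
  have hwSwpos : 0 < w ⬝ᵥ (S *ᵥ w) := by rw [hwSw]; exact hVpos
  have cs : (z ⬝ᵥ (S *ᵥ w)) ^ 2 ≤ (z ⬝ᵥ (S *ᵥ z)) * (w ⬝ᵥ (S *ᵥ w)) := by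
    set α : ℝ := z ⬝ᵥ (S *ᵥ w) with hα
    set t : ℝ := -α / (w ⬝ᵥ (S *ᵥ w)) with htt
    have hq : 0 ≤ (z + t • w) ⬝ᵥ (S *ᵥ (z + t • w)) := by
      rcases eq_or_ne (z + t • w) 0 with h | h
      · rw [h]; simp
      · exact le_of_lt (by simpa using hS.dotProduct_mulVec_pos h)
    have hexp : (z + t • w) ⬝ᵥ (S *ᵥ (z + t • w)) =
        z ⬝ᵥ (S *ᵥ z) + 2 * t * α + t ^ 2 * (w ⬝ᵥ (S *ᵥ w)) := by
      simp only [Matrix.mulVec_add, dotProduct_add, add_dotProduct,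
        Matrix.mulVec_smul, dotProduct_smul, smul_dotProduct, smul_eq_mul]
      rw [hsdS w z]
      simp only [hα]
      ring
    rw [hexp] at hq
    have ht2 : t * (w ⬝ᵥ (S *ᵥ w)) = -α := by
      rw [htt]; field_simp
    nlinarith
  have hzbtilSw : z ⬝ᵥ btil = z ⬝ᵥ (S *ᵥ w) := by rw [hSw]
  have h1 : (z ⬝ᵥ b) ^ 2 ≤ (z ⬝ᵥ (S *ᵥ w)) ^ 2 := by
    rw [← hzbtilSw]
    nlinarith
  have h2 : (z ⬝ᵥ b) ^ 2 ≤ (z ⬝ᵥ (S *ᵥ z)) * (btil ⬝ᵥ (A *ᵥ btil)) := by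
    rw [← hwSw]
    linarith
  rw [div_le_iff₀ hzSz]
  linarith [h2]
end

section
/- Let v ∈ ℝ^d with a := Σ_{i=1}^d v_i ≥ 0, and let Λ ≥ 0. Define b := Σ_{i=1}^d max(0, −v_i). Then ∫_{ℝ^d} exp(Σ_i x_i) · 1{∃ t ∈ [0,Λ] : x < −t v (componentwise strict)} dx equals 1 + Λ b if a = 0, and equals 1 + ((1 − e^{−aΛ})/a) b if a > 0. -/
open MeasureTheory

namespace Stmt7Aux

open Set Real Filter



lemma om_meas {d : ℕ} (r : Fin d → ℝ) :
    MeasurableSet {x : Fin d → ℝ | ∀ i, x i < r i} := by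
  have : {x : Fin d → ℝ | ∀ i, x i < r i} = ⋂ i, (fun x : Fin d → ℝ => x i) ⁻¹' (Iio (r i)) := by
    ext x; simp [Set.mem_iInter]
  rw [this]
  exact MeasurableSet.iInter fun i => (measurable_pi_apply i) measurableSet_Iio

lemma mu_pi {d : ℕ} (r : Fin d → ℝ) :
    (volume.withDensity fun x : Fin d → ℝ => ENNReal.ofReal (Real.exp (∑ i, x i)))
      {x : Fin d → ℝ | ∀ i, x i < r i}
    = ENNReal.ofReal (Real.exp (∑ i, r i)) := by
  have hind : ∀ x : Fin d → ℝ,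
      ({x : Fin d → ℝ | ∀ i, x i < r i}).indicator (fun x => Real.exp (∑ i, x i)) x
        = ∏ i, (Iio (r i)).indicator Real.exp (x i) := by
    intro x
    by_cases hx : x ∈ {x : Fin d → ℝ | ∀ i, x i < r i}
    · rw [Set.indicator_of_mem hx]
      rw [Real.exp_sum]
      exact Finset.prod_congr rfl fun i _ =>
        (Set.indicator_of_mem (show x i ∈ Iio (r i) from hx i) _).symm
    · rw [Set.indicator_of_notMem hx]
      have hx' : ¬ ∀ i, x i < r i := hx
      push_neg at hx'
      obtain ⟨i, hi⟩ := hx'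
      refine (Finset.prod_eq_zero (Finset.mem_univ i) ?_).symm
      exact Set.indicator_of_notMem (by simpa using hi) _
  have hint1 : ∀ i : Fin d, Integrable ((Iio (r i)).indicator Real.exp) := by
    intro i
    exact ((integrableOn_exp_Iic (r i)).mono_set Iio_subset_Iic_self).integrable_indicator
      measurableSet_Iio
  have hInt : Integrable (fun x : Fin d → ℝ => ∏ i, (Iio (r i)).indicator Real.exp (x i)) :=
    Integrable.fintype_prod hint1
  have hIntOn : IntegrableOn (fun x : Fin d → ℝ => Real.exp (∑ i, x i))
      {x : Fin d → ℝ | ∀ i, x i < r i} := by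
    have := (integrable_indicator_iff (om_meas r)).mp ((funext hind) ▸ hInt : Integrable
      (({x : Fin d → ℝ | ∀ i, x i < r i}).indicator (fun x => Real.exp (∑ i, x i))))
    exact this
  rw [withDensity_apply _ (om_meas r)]
  rw [← ofReal_integral_eq_lintegral_ofReal hIntOn
    (Filter.Eventually.of_forall fun x => (Real.exp_pos _).le)]
  congr 1
  rw [← integral_indicator (om_meas r)]
  simp_rw [hind]
  rw [volume_pi, MeasureTheory.integral_fintype_prod_eq_prod (𝕜 := ℝ) (ι := Fin d)
    (fun i => (Iio (r i)).indicator Real.exp)]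
  rw [Real.exp_sum]
  refine Finset.prod_congr rfl fun i _ => ?_
  rw [integral_indicator measurableSet_Iio]
  rw [Measure.restrict_congr_set Iio_ae_eq_Iic]
  exact integral_exp_Iic (r i)

section
variable {d : ℕ} (v : Fin d → ℝ)
variable {d : ℕ} (v : Fin d → ℝ)

def Om (t : ℝ) : Set (Fin d → ℝ) := {x | ∀ i, x i < -t * v i}

noncomputable def mu (d : ℕ) : Measure (Fin d → ℝ) :=
  volume.withDensity fun x => ENNReal.ofReal (Real.exp (∑ i, x i))

lemma Om_meas (t : ℝ) : MeasurableSet (Om v t) := om_meas _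

variable {a b : ℝ} (ha : a = ∑ i, v i) (hb : b = ∑ i, max 0 (-(v i)))

include ha in
lemma mu_Om (t : ℝ) : mu d (Om v t) = ENNReal.ofReal (Real.exp (-(t * a))) := by
  rw [mu, Om, mu_pi (fun i => -t * v i)]
  congr 2
  rw [← Finset.mul_sum, ← ha]; ring

include ha hb in
lemma mu_inter {s t : ℝ} (hst : s ≤ t) :
    mu d (Om v s ∩ Om v t) = ENNReal.ofReal (Real.exp (-(t * a) - (t - s) * b)) := by
  have hset : Om v s ∩ Om v t = {x : Fin d → ℝ | ∀ i, x i < min (-s * v i) (-t * v i)} := by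
    ext x
    simp only [Om, Set.mem_inter_iff, Set.mem_setOf_eq, lt_min_iff, ← forall_and]
  rw [mu, hset, mu_pi]
  congr 2
  have hmin : ∀ i, min (-s * v i) (-t * v i) = -t * v i - (t - s) * max 0 (-(v i)) := by
    intro i
    rcases le_total 0 (v i) with h | h
    · rw [max_eq_left (neg_nonpos.mpr h), min_eq_right]
      · ring
      · nlinarith
    · rw [max_eq_right (neg_nonneg.mpr h), min_eq_left]
      · ring
      · nlinarith
  rw [Finset.sum_congr rfl fun i _ => hmin i, Finset.sum_sub_distrib, ← Finset.mul_sum,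
    ← Finset.mul_sum, ← ha, ← hb]
  ring

lemma om_interval {s u t : ℝ} (hsu : s ≤ u) (hut : u ≤ t) :
    Om v s ∩ Om v t ⊆ Om v u := by
  rintro x ⟨h1, h2⟩ i
  rcases le_total 0 (v i) with h | h
  · exact lt_of_lt_of_le (h2 i) (by nlinarith)
  · exact lt_of_lt_of_le (h1 i) (by nlinarith)

include ha hb in
lemma mu_W (ha0 : 0 ≤ a) (hb0 : 0 ≤ b) {δ : ℝ} (hδ : 0 ≤ δ) (n : ℕ) :
    mu d (⋃ k ∈ Finset.range (n + 1), Om v (k * δ))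
      = ENNReal.ofReal (1 + (1 - Real.exp (-(b * δ)))
          * ∑ k ∈ Finset.range n, Real.exp (-(a * δ) * (k + 1))) := by
  induction n with
  | zero =>
      have h0 : (⋃ k ∈ Finset.range (0 + 1), Om v ((k : ℝ) * δ)) = Om v 0 := by
        rw [Finset.range_one, Finset.set_biUnion_singleton]
        norm_num
      rw [h0, mu_Om v ha 0]
      norm_num
  | succ n ih =>
      have hWmeas : MeasurableSet (⋃ k ∈ Finset.range (n + 1), Om v (k * δ)) :=
        MeasurableSet.biUnion (Finset.range (n + 1)).countable_toSet fun k _ => Om_meas v _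
      set W : Set (Fin d → ℝ) := ⋃ k ∈ Finset.range (n + 1), Om v (k * δ) with hW
      set A : Set (Fin d → ℝ) := Om v ((n + 1 : ℕ) * δ) with hA
      have hsplit : (⋃ k ∈ Finset.range (n + 2), Om v (k * δ)) = A ∪ W := by
        rw [show n + 2 = (n + 1) + 1 from rfl, Finset.range_add_one, Finset.set_biUnion_insert]
      have hAW : A \ W = A \ Om v (n * δ) := by
        apply Set.Subset.antisymm
        · rintro x ⟨hxA, hxW⟩
          refine ⟨hxA, fun hxn => hxW ?_⟩
          exact Set.mem_biUnion (Finset.self_mem_range_succ n) hxn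
        · rintro x ⟨hxA, hxn⟩
          refine ⟨hxA, fun hxW => hxn ?_⟩
          obtain ⟨k, hk, hxk⟩ := Set.mem_iUnion₂.mp hxW
          have hkn : (k : ℝ) * δ ≤ n * δ := by
            have : (k : ℝ) ≤ n := by
              exact_mod_cast Nat.lt_succ_iff.mp (Finset.mem_range.mp hk)
            nlinarith
          have hnn : (n : ℝ) * δ ≤ (n + 1 : ℕ) * δ := by
            have : (n : ℝ) ≤ (n + 1 : ℕ) := by exact_mod_cast Nat.le_succ n
            nlinarith
          exact om_interval v hkn hnn ⟨hxk, hxA⟩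
      have hinter : A ∩ Om v (n * δ) = Om v (n * δ) ∩ A := Set.inter_comm _ _
      have hfin : mu d (A ∩ Om v (n * δ)) ≠ ⊤ := by
        rw [hinter, mu_inter v ha hb (by push_cast; nlinarith)]
        exact ENNReal.ofReal_ne_top
      have hdiff : mu d (A \ W)
          = ENNReal.ofReal (Real.exp (-(((n : ℝ) + 1) * δ * a)) * (1 - Real.exp (-(b * δ)))) := by
        rw [hAW, show A \ Om v (n * δ) = A \ (A ∩ Om v (n * δ)) by rw [Set.diff_self_inter]]
        rw [measure_diff Set.inter_subset_left
          ((Om_meas v _).inter (Om_meas v _)).nullMeasurableSet hfin]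
        rw [mu_Om v ha, hinter, mu_inter v ha hb (by push_cast; nlinarith)]
        rw [← ENNReal.ofReal_sub _ (Real.exp_pos _).le]
        congr 1
        have h1 : -(((n : ℕ) + 1 : ℕ) * δ * a) - ((((n : ℕ) + 1 : ℕ) : ℝ) * δ - n * δ) * b
            = -(((n : ℝ) + 1) * δ * a) + -(b * δ) := by push_cast; ring
        have h2 : (-((((n : ℕ) + 1 : ℕ) : ℝ) * δ * a)) = -(((n : ℝ) + 1) * δ * a) := by
          push_cast; ring
        rw [h1, h2, Real.exp_add]
        ring
      have hAuW : A ∪ W = (A \ W) ∪ W := (Set.diff_union_self).symm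
      have hE : Real.exp (-(b * δ)) ≤ 1 := Real.exp_le_one_iff.mpr (by nlinarith)
      have h2 : (0:ℝ) ≤ ∑ k ∈ Finset.range n, Real.exp (-(a * δ) * (k + 1)) :=
        Finset.sum_nonneg fun k _ => (Real.exp_pos _).le
      rw [hsplit, hAuW, measure_union Set.disjoint_sdiff_left hWmeas, hdiff, ih,
        ← ENNReal.ofReal_add (mul_nonneg (Real.exp_pos _).le (by linarith)) (by nlinarith)]
      congr 1
      rw [Finset.sum_range_succ,
        show Real.exp (-(a * δ) * ((n : ℝ) + 1)) = Real.exp (-(((n : ℝ) + 1) * δ * a)) from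
          by ring_nf]
      ring

end

section
variable {d : ℕ} (v : Fin d → ℝ)

def U (Λ : ℝ) (m : ℕ) : Set (Fin d → ℝ) :=
  ⋃ k ∈ Finset.range (2 ^ m + 1), Om v ((k : ℝ) * (Λ / 2 ^ m))

lemma U_mono {Λ : ℝ} : Monotone (U v Λ) := by
  apply monotone_nat_of_le_succ
  intro m
  apply Set.iUnion₂_subset
  intro k hk
  have h1 : ((k : ℝ)) * (Λ / 2 ^ m) = ((2 * k : ℕ) : ℝ) * (Λ / 2 ^ (m + 1)) := by
    push_cast
    field_simp
    ring
  rw [h1, U]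
  have h2 : 2 * k ∈ Finset.range (2 ^ (m + 1) + 1) := by
    have := Finset.mem_range.mp hk
    simp only [Finset.mem_range]
    omega
  exact Set.subset_iUnion₂ (s := fun (k : ℕ) (_ : k ∈ Finset.range (2 ^ (m + 1) + 1)) => Om v ((k : ℝ) * (Λ / 2 ^ (m + 1)))) (2 * k) h2

lemma U_union_eq {Λ : ℝ} (hΛ : 0 ≤ Λ) :
    (⋃ m, U v Λ m) = {x : Fin d → ℝ | ∃ t ∈ Set.Icc (0:ℝ) Λ, ∀ i, x i < -t * v i} := by
  apply Set.Subset.antisymm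
  · apply Set.iUnion_subset
    intro m
    apply Set.iUnion₂_subset
    intro k hk
    intro x hx
    refine ⟨(k : ℝ) * (Λ / 2 ^ m), ⟨?_, ?_⟩, hx⟩
    · positivity
    · have hk' : (k : ℝ) ≤ 2 ^ m := by
        exact_mod_cast Nat.lt_succ_iff.mp (Finset.mem_range.mp hk)
      calc (k : ℝ) * (Λ / 2 ^ m) ≤ 2 ^ m * (Λ / 2 ^ m) := by
            apply mul_le_mul_of_nonneg_right hk'; positivity
        _ = Λ := by field_simp
  · rintro x ⟨t, ⟨ht0, htΛ⟩, hx⟩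
    rcases eq_or_lt_of_le hΛ with hΛ0 | hΛ0
    · have ht : t = 0 := le_antisymm (hΛ0 ▸ htΛ) ht0
      apply Set.mem_iUnion.mpr ⟨0, _⟩
      apply Set.mem_biUnion (show 0 ∈ Finset.range (2 ^ 0 + 1) by simp)
      have : ((0 : ℕ) : ℝ) * (Λ / 2 ^ 0) = 0 := by norm_num
      rw [this]
      intro i; have := hx i; rw [ht] at this; simpa using this
    · -- Λ > 0
      set O : Set ℝ := ⋂ i, {s : ℝ | s * v i < -x i} with hO
      have hOopen : IsOpen O :=
        isOpen_iInter_of_finite fun i =>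
          isOpen_lt (continuous_id.mul continuous_const) continuous_const
      have htO : t ∈ O := by
        apply Set.mem_iInter.mpr
        intro i
        have := hx i
        simp only [Set.mem_setOf_eq]
        linarith
      obtain ⟨ε, hε, hball⟩ := Metric.isOpen_iff.mp hOopen t htO
      obtain ⟨m, hm⟩ := pow_unbounded_of_one_lt (Λ / ε) (one_lt_two (α := ℝ))
      have h2m : (0:ℝ) < 2 ^ m := by positivity
      have hδε : Λ / 2 ^ m < ε := by
        rw [div_lt_iff₀ h2m]
        calc Λ = (Λ / ε) * ε := by field_simp
          _ < 2 ^ m * ε := by exact mul_lt_mul_of_pos_right hm hε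
          _ = ε * 2 ^ m := by ring
      set k : ℕ := ⌊t * 2 ^ m / Λ⌋₊ with hk
      have harg0 : 0 ≤ t * 2 ^ m / Λ := by positivity
      have hkle : k ≤ 2 ^ m := by
        have h1 : t * 2 ^ m / Λ ≤ ((2 ^ m : ℕ) : ℝ) := by
          push_cast
          rw [div_le_iff₀ hΛ0]
          nlinarith
        calc k ≤ ⌊((2 ^ m : ℕ) : ℝ)⌋₊ := Nat.floor_le_floor h1
          _ = 2 ^ m := Nat.floor_natCast _
      set s : ℝ := (k : ℝ) * (Λ / 2 ^ m) with hs
      have hsle : s ≤ t := by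
        have h1 : (k : ℝ) ≤ t * 2 ^ m / Λ := Nat.floor_le harg0
        rw [hs]
        calc (k : ℝ) * (Λ / 2 ^ m) ≤ (t * 2 ^ m / Λ) * (Λ / 2 ^ m) := by
              apply mul_le_mul_of_nonneg_right h1; positivity
          _ = t := by field_simp
      have hsgt : t - s < ε := by
        have h1 : t * 2 ^ m / Λ < (k : ℝ) + 1 := Nat.lt_floor_add_one _
        have h2 : t < s + Λ / 2 ^ m := by
          rw [hs]
          have := mul_lt_mul_of_pos_right h1 (show (0:ℝ) < Λ / 2 ^ m by positivity)
          calc t = (t * 2 ^ m / Λ) * (Λ / 2 ^ m) := by field_simp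
            _ < ((k : ℝ) + 1) * (Λ / 2 ^ m) := this
            _ = (k : ℝ) * (Λ / 2 ^ m) + Λ / 2 ^ m := by ring
        linarith
      have hsO : s ∈ O := by
        apply hball
        rw [Metric.mem_ball, Real.dist_eq, abs_sub_lt_iff]
        constructor <;> linarith
      apply Set.mem_iUnion.mpr ⟨m, _⟩
      apply Set.mem_biUnion (Finset.mem_range.mpr (Nat.lt_succ_of_le hkle))
      intro i
      have := Set.mem_iInter.mp hsO i
      simp only [Set.mem_setOf_eq] at this
      rw [← hs]
      linarith

end



noncomputable def rr (a b Λ : ℝ) (m : ℕ) : ℝ :=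
  1 + (1 - Real.exp (-(b * (Λ / 2 ^ m))))
      * ∑ k ∈ Finset.range (2 ^ m), Real.exp (-(a * (Λ / 2 ^ m)) * (k + 1))

lemma tendsto_slope_exp (c : ℝ) :
    Tendsto (fun δ : ℝ => (1 - Real.exp (-(c * δ))) / δ) (nhdsWithin 0 (Set.Ioi 0)) (nhds c) := by
  have hd : HasDerivAt (fun δ : ℝ => 1 - Real.exp (-(c * δ))) c 0 := by
    have h1 : HasDerivAt (fun δ : ℝ => -(c * δ)) (-c) 0 := by
      have h0 := ((hasDerivAt_id (0:ℝ)).const_mul c).neg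
      simp only [mul_one] at h0
      exact h0
    have h2 := h1.exp
    simp only [mul_zero, neg_zero, Real.exp_zero, one_mul] at h2
    simpa using h2.const_sub 1
  have := hasDerivAt_iff_tendsto_slope.mp hd
  have h3 : Tendsto (slope (fun δ : ℝ => 1 - Real.exp (-(c * δ))) 0)
      (nhdsWithin 0 (Set.Ioi 0)) (nhds c) :=
    this.mono_left (nhdsWithin_mono 0 (fun x hx => Set.mem_compl_singleton_iff.mpr (ne_of_gt hx)))
  apply h3.congr
  intro δ
  simp [slope, mul_zero, neg_zero, Real.exp_zero, div_eq_inv_mul]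

lemma tendsto_delta {Λ : ℝ} (hΛ : 0 < Λ) :
    Tendsto (fun m : ℕ => Λ / 2 ^ m) atTop (nhdsWithin 0 (Set.Ioi 0)) := by
  apply tendsto_nhdsWithin_of_tendsto_nhds_of_eventually_within
  · have h1 : Tendsto (fun m : ℕ => ((1:ℝ)/2) ^ m) atTop (nhds 0) := by
      apply tendsto_pow_atTop_nhds_zero_of_lt_one <;> norm_num
    have := h1.const_mul Λ
    simp only [mul_zero] at this
    apply this.congr
    intro m
    rw [div_pow, one_pow]
    ring
  · filter_upwards with m
    have : (0:ℝ) < 2 ^ m := by positivity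
    exact div_pos hΛ this

lemma rr_lim_a0 {b Λ : ℝ} (hΛ : 0 < Λ) :
    Tendsto (rr 0 b Λ) atTop (nhds (1 + Λ * b)) := by
  have hrw : ∀ m : ℕ, rr 0 b Λ m = 1 + ((1 - Real.exp (-(b * (Λ / 2 ^ m)))) / (Λ / 2 ^ m)) * Λ := by
    intro m
    have h2 : (0:ℝ) < 2 ^ m := by positivity
    have hδ : (0:ℝ) < Λ / 2 ^ m := div_pos hΛ h2
    simp only [rr, zero_mul, neg_zero, Real.exp_zero, Finset.sum_const, Finset.card_range,
      nsmul_eq_mul, mul_one]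
    have hc : (1 - Real.exp (-(b * (Λ / 2 ^ m)))) / (Λ / 2 ^ m) * Λ
        = (1 - Real.exp (-(b * (Λ / 2 ^ m)))) * ((2 ^ m : ℕ) : ℝ) := by
      push_cast
      field_simp
    rw [hc]
  have h1 : Tendsto (fun m : ℕ => 1 + ((1 - Real.exp (-(b * (Λ / 2 ^ m)))) / (Λ / 2 ^ m)) * Λ)
      atTop (nhds (1 + b * Λ)) := by
    exact (((tendsto_slope_exp b).comp (tendsto_delta hΛ)).mul_const Λ).const_add 1
  rw [show 1 + Λ * b = 1 + b * Λ by ring]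
  exact h1.congr (fun m => (hrw m).symm)

lemma rr_lim_apos {a b Λ : ℝ} (hΛ : 0 < Λ) (ha : 0 < a) :
    Tendsto (rr a b Λ) atTop (nhds (1 + ((1 - Real.exp (-a * Λ)) / a) * b)) := by
  have hrw : ∀ m : ℕ, rr a b Λ m
      = 1 + (((1 - Real.exp (-(b * (Λ / 2 ^ m)))) / (Λ / 2 ^ m))
            / ((1 - Real.exp (-(a * (Λ / 2 ^ m)))) / (Λ / 2 ^ m)))
          * (Real.exp (-(a * (Λ / 2 ^ m))) * (1 - Real.exp (-(a * Λ)))) := by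
    intro m
    have h2 : (0:ℝ) < 2 ^ m := by positivity
    have hδ : (0:ℝ) < Λ / 2 ^ m := div_pos hΛ h2
    rw [rr]
    set δ := Λ / 2 ^ m with hδdef
    set q := Real.exp (-(a * δ)) with hq
    have hq1 : q < 1 := by
      rw [hq, Real.exp_lt_one_iff]
      nlinarith
    have hqn : q ^ (2 ^ m : ℕ) = Real.exp (-(a * Λ)) := by
      rw [hq, ← Real.exp_nat_mul]
      congr 1
      have : ((2:ℝ) ^ m) * δ = Λ := by rw [hδdef]; field_simp
      push_cast
      nlinarith [this]
    have hsum : ∑ k ∈ Finset.range (2 ^ m), Real.exp (-(a * δ) * (k + 1))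
        = q * ((1 - q ^ (2 ^ m : ℕ)) / (1 - q)) := by
      have h3 : ∀ k : ℕ, Real.exp (-(a * δ) * (k + 1)) = q ^ (k + 1) := by
        intro k
        rw [hq, ← Real.exp_nat_mul]
        · congr 1; push_cast; ring
      have h4 : ∀ k : ℕ, q ^ (k + 1) = q ^ k * q := fun k => pow_succ q k
      rw [Finset.sum_congr rfl fun k _ => (h3 k).trans (h4 k), ← Finset.sum_mul,
        geom_sum_eq (ne_of_lt hq1) (2 ^ m)]
      rw [show (q ^ (2 ^ m) - 1) / (q - 1) = (1 - q ^ (2 ^ m)) / (1 - q) from by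
        rw [← neg_div_neg_eq]; ring_nf]
      ring
    have h1q : (1:ℝ) - q ≠ 0 := by
      have : q < 1 := hq1
      linarith
    have hδpos : (0:ℝ) < δ := hδ
    clear_value δ q
    rw [hsum, hqn]
    congr 1
    have hδne : δ ≠ 0 := ne_of_gt hδpos
    field_simp
  have hδ0 : Tendsto (fun m : ℕ => Λ / 2 ^ m) atTop (nhds 0) :=
    (tendsto_delta hΛ).mono_right nhdsWithin_le_nhds
  have hq1 : Tendsto (fun m : ℕ => Real.exp (-(a * (Λ / 2 ^ m)))) atTop (nhds 1) := by
    have h1 : Tendsto (fun m : ℕ => -(a * (Λ / 2 ^ m))) atTop (nhds 0) := by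
      have := (hδ0.const_mul a).neg
      simpa using this
    have := (Real.continuous_exp.tendsto 0).comp h1
    simpa [Function.comp_def] using this
  have hn1 : Tendsto (fun m : ℕ => (1 - Real.exp (-(b * (Λ / 2 ^ m)))) / (Λ / 2 ^ m))
      atTop (nhds b) := (tendsto_slope_exp b).comp (tendsto_delta hΛ)
  have hn2 : Tendsto (fun m : ℕ => (1 - Real.exp (-(a * (Λ / 2 ^ m)))) / (Λ / 2 ^ m))
      atTop (nhds a) := (tendsto_slope_exp a).comp (tendsto_delta hΛ)
  have hfinal : Tendsto (fun m : ℕ => 1 + (((1 - Real.exp (-(b * (Λ / 2 ^ m)))) / (Λ / 2 ^ m))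
      / ((1 - Real.exp (-(a * (Λ / 2 ^ m)))) / (Λ / 2 ^ m)))
      * (Real.exp (-(a * (Λ / 2 ^ m))) * (1 - Real.exp (-(a * Λ)))))
      atTop (nhds (1 + (b / a) * (1 * (1 - Real.exp (-(a * Λ)))))) :=
    (((hn1.div hn2 (ne_of_gt ha)).mul (hq1.mul_const _))).const_add 1
  have heq : 1 + (b / a) * (1 * (1 - Real.exp (-(a * Λ))))
      = 1 + ((1 - Real.exp (-a * Λ)) / a) * b := by rw [neg_mul]; ring
  rw [← heq]
  exact hfinal.congr (fun m => (hrw m).symm)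

lemma integral_eq_mu {d : ℕ} (S : Set (Fin d → ℝ)) (hS : MeasurableSet S) :
    ∫ x, S.indicator (fun x => Real.exp (∑ i, x i)) x = (mu d S).toReal := by
  have hfm : Measurable (fun x : Fin d → ℝ => Real.exp (∑ i, x i)) :=
    Real.measurable_exp.comp (Finset.measurable_sum _ fun i _ => measurable_pi_apply i)
  rw [integral_eq_lintegral_of_nonneg_ae
    (Filter.Eventually.of_forall fun x => Set.indicator_nonneg (fun y _ => (Real.exp_pos _).le) x)
    ((hfm.indicator hS).aestronglyMeasurable)]
  congr 1
  rw [mu, withDensity_apply _ hS, ← lintegral_indicator (f := fun x : Fin d → ℝ =>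
    ENNReal.ofReal (Real.exp (∑ i, x i))) hS]
  congr 1
  funext x
  by_cases hx : x ∈ S
  · simp [Set.indicator_of_mem hx]
  · simp [Set.indicator_of_notMem hx]


end Stmt7Aux

open Stmt7Aux Set Real Filter in
/-- Value of `∫_{ℝ^d} e^{1ᵀx} 1{∃ t ∈ [0,Λ] : x < −t v}dx` when `a = Σᵢ vᵢ ≥ 0`:
it equals `1 + Λ b` if `a = 0` and `1 + ((1 − e^{−aΛ})/a) b` if `a > 0`, where
`b = Σᵢ max(0, −vᵢ)`. -/
theorem stmt_7 (d : ℕ) (v : Fin d → ℝ) (Λ : ℝ) (hΛ : 0 ≤ Λ)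
    (a b : ℝ) (ha : a = ∑ i, v i) (ha0 : 0 ≤ a) (hb : b = ∑ i, max 0 (-(v i))) :
    (a = 0 →
      ∫ x : Fin d → ℝ,
        Set.indicator {x : Fin d → ℝ | ∃ t ∈ Set.Icc (0:ℝ) Λ, ∀ i, x i < -t * v i}
          (fun x => Real.exp (∑ i, x i)) x
        = 1 + Λ * b) ∧
    (0 < a →
      ∫ x : Fin d → ℝ,
        Set.indicator {x : Fin d → ℝ | ∃ t ∈ Set.Icc (0:ℝ) Λ, ∀ i, x i < -t * v i}
          (fun x => Real.exp (∑ i, x i)) x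
        = 1 + ((1 - Real.exp (-a * Λ)) / a) * b) := by
  have hb0 : 0 ≤ b := hb ▸ Finset.sum_nonneg (fun i _ => le_max_left _ _)
  set Ω := {x : Fin d → ℝ | ∃ t ∈ Set.Icc (0:ℝ) Λ, ∀ i, x i < -t * v i} with hΩ
  have hΩU : Ω = ⋃ m, U v Λ m := (U_union_eq v hΛ).symm
  have hUmeas : ∀ m, MeasurableSet (U v Λ m) := fun m =>
    MeasurableSet.biUnion (Finset.range (2 ^ m + 1)).countable_toSet fun k _ => Om_meas v _
  have hΩmeas : MeasurableSet Ω := hΩU ▸ MeasurableSet.iUnion hUmeas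
  have hμU : ∀ m, mu d (U v Λ m) = ENNReal.ofReal (rr a b Λ m) := by
    intro m
    have hδ : (0:ℝ) ≤ Λ / 2 ^ m := by positivity
    exact mu_W v ha hb ha0 hb0 hδ (2 ^ m)
  have hlim : Tendsto (fun m => mu d (U v Λ m)) atTop (nhds (mu d Ω)) := by
    rw [hΩU]
    exact tendsto_measure_iUnion_atTop (U_mono v)
  have key : ∀ L : ℝ, 0 ≤ L → Tendsto (rr a b Λ) atTop (nhds L) →
      ∫ x, Ω.indicator (fun x => Real.exp (∑ i, x i)) x = L := by
    intro L hL hT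
    have h2 : Tendsto (fun m => mu d (U v Λ m)) atTop (nhds (ENNReal.ofReal L)) := by
      simp_rw [hμU]
      exact ENNReal.tendsto_ofReal hT
    have h3 : mu d Ω = ENNReal.ofReal L := tendsto_nhds_unique hlim h2
    rw [integral_eq_mu Ω hΩmeas, h3, ENNReal.toReal_ofReal hL]
  rcases eq_or_lt_of_le hΛ with h0 | hpos
  · -- Λ = 0
    have hrr : ∀ m, rr a b Λ m = 1 := by
      intro m
      rw [rr, ← h0]
      norm_num
    have hT : Tendsto (rr a b Λ) atTop (nhds 1) :=
      tendsto_const_nhds.congr fun m => (hrr m).symm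
    have hI := key 1 zero_le_one hT
    constructor
    · intro _
      rw [hI, ← h0, zero_mul, add_zero]
    · intro _
      rw [hI, ← h0, mul_zero, Real.exp_zero, sub_self, zero_div, zero_mul, add_zero]
  · constructor
    · intro ha'
      subst ha'
      have : (0:ℝ) ≤ 1 + Λ * b := by nlinarith
      exact key (1 + Λ * b) this (rr_lim_a0 hpos)
    · intro hapos
      have hL0 : (0:ℝ) ≤ 1 + ((1 - Real.exp (-a * Λ)) / a) * b := by
        have h1 : Real.exp (-a * Λ) ≤ 1 := Real.exp_le_one_iff.mpr (by nlinarith)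
        have h2 : (0:ℝ) ≤ (1 - Real.exp (-a * Λ)) / a := by
          apply div_nonneg (by linarith) (le_of_lt hapos)
        nlinarith
      exact key _ hL0 (rr_lim_apos hpos hapos)
end

section
/- Let Σ be a d×d symmetric positive definite matrix and b ∈ ℝ^d with at least one positive component. Let N be a centered Gaussian vector in ℝ^d with covariance Σ, let b̃ solve min_{x ≥ b} x^⊤ Σ^{-1} x, and put σ_b^2 = 1/(b̃^⊤ Σ^{-1} b̃). Then for all u > 0, P(N > u b componentwise) ≤ exp(−u^2/(2 σ_b^2)). -/
open MeasureTheory Matrix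

open ProbabilityTheory in
lemma gaussian_tail_aux (v : NNReal) (hv : v ≠ 0) (a : ℝ) (ha : 0 ≤ a) :
    ((gaussianReal 0 v) (Set.Ioi a)).toReal ≤ Real.exp (-(a ^ 2) / (2 * v)) := by
  have hv0 : (0 : ℝ) < v := by positivity
  rw [gaussianReal_apply_eq_integral 0 hv, ENNReal.toReal_ofReal
    (integral_nonneg fun x => gaussianPDFReal_nonneg _ _ _)]
  have h1 : ∫ x in Set.Ioi a, gaussianPDFReal 0 v x
      ≤ ∫ x in Set.Ioi a, Real.exp (-(a ^ 2) / (2 * v)) * gaussianPDFReal a v x := by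
    refine setIntegral_mono_on (integrable_gaussianPDFReal _ _).restrict
      ((integrable_gaussianPDFReal _ _).const_mul _).restrict measurableSet_Ioi ?_
    intro x hx
    have hax : a ≤ x := le_of_lt hx
    simp only [gaussianPDFReal, sub_zero]
    have hE : Real.exp (-x ^ 2 / (2 * v)) ≤
        Real.exp (-(a ^ 2) / (2 * v)) * Real.exp (-(x - a) ^ 2 / (2 * v)) := by
      rw [← Real.exp_add]
      apply Real.exp_le_exp.2
      rw [← add_div, div_le_div_iff_of_pos_right (by positivity : (0:ℝ) < 2 * v)]
      nlinarith
    calc (Real.sqrt (2 * Real.pi * v))⁻¹ * Real.exp (-x ^ 2 / (2 * v))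
        ≤ (Real.sqrt (2 * Real.pi * v))⁻¹ *
          (Real.exp (-(a ^ 2) / (2 * v)) * Real.exp (-(x - a) ^ 2 / (2 * v))) :=
          mul_le_mul_of_nonneg_left hE (by positivity)
      _ = Real.exp (-(a ^ 2) / (2 * v)) *
          ((Real.sqrt (2 * Real.pi * v))⁻¹ * Real.exp (-(x - a) ^ 2 / (2 * v))) := by ring
  have h2 : ∫ x in Set.Ioi a, Real.exp (-(a ^ 2) / (2 * v)) * gaussianPDFReal a v x
      ≤ Real.exp (-(a ^ 2) / (2 * v)) := by
    rw [integral_const_mul]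
    have h3 : ∫ x in Set.Ioi a, gaussianPDFReal a v x ≤ ∫ x, gaussianPDFReal a v x :=
      setIntegral_le_integral (integrable_gaussianPDFReal _ _)
        (ae_of_all _ fun x => gaussianPDFReal_nonneg _ _ _)
    rw [integral_gaussianPDFReal_eq_one a hv] at h3
    calc Real.exp (-(a ^ 2) / (2 * v)) * ∫ x in Set.Ioi a, gaussianPDFReal a v x
        ≤ Real.exp (-(a ^ 2) / (2 * v)) * 1 :=
          mul_le_mul_of_nonneg_left h3 (Real.exp_nonneg _)
      _ = Real.exp (-(a ^ 2) / (2 * v)) := mul_one _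
  exact h1.trans h2

/-- Borell-type bound for a centered Gaussian vector `N` with covariance `Σ`:
`P(N > u b) ≤ exp(−u²/(2σ_b²))` for `u > 0`, where `σ_b² = 1/(b̃ᵀ Σ⁻¹ b̃)` and `b̃`
solves the quadratic program `min_{x ≥ b} xᵀ Σ⁻¹ x`. -/
theorem stmt_13 {Ω : Type*} [MeasurableSpace Ω] (P : Measure Ω) [IsProbabilityMeasure P]
    (d : ℕ) (S : Matrix (Fin d) (Fin d) ℝ) (hS : S.PosDef) (hsymm : S.IsSymm)
    (N : Ω → Fin d → ℝ) (hmeas : Measurable N)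
    (hGauss : ∀ l : Fin d → ℝ,
      P.map (fun ω => l ⬝ᵥ N ω) = ProbabilityTheory.gaussianReal 0 (l ⬝ᵥ (S *ᵥ l)).toNNReal)
    (b : Fin d → ℝ) (hb : ∃ i, 0 < b i)
    (btil : Fin d → ℝ) (hbtil : (∀ i, b i ≤ btil i) ∧
      ∀ y : Fin d → ℝ, (∀ i, b i ≤ y i) →
        btil ⬝ᵥ (S⁻¹ *ᵥ btil) ≤ y ⬝ᵥ (S⁻¹ *ᵥ y))
    (σb2 : ℝ) (hσ : σb2 = 1 / (btil ⬝ᵥ (S⁻¹ *ᵥ btil)))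
    (u : ℝ) (hu : 0 < u) :
    (P {ω | ∀ i, u * b i < N ω i}).toReal ≤ Real.exp (-(u ^ 2) / (2 * σb2)) := by
  obtain ⟨hble, hmin⟩ := hbtil
  obtain ⟨T, hT⟩ : ∃ T, S⁻¹ = T := ⟨_, rfl⟩
  rw [hT] at hmin hσ
  have hTpd : T.PosDef := hT ▸ hS.inv
  have hTsymm : Tᵀ = T := by rw [← hT, Matrix.transpose_nonsing_inv, hsymm]
  have hTpos : ∀ x : Fin d → ℝ, x ≠ 0 → 0 < x ⬝ᵥ (T *ᵥ x) := by
    intro x hx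
    have := hTpd.dotProduct_mulVec_pos hx
    simpa using this
  obtain ⟨w, hw⟩ : ∃ w : Fin d → ℝ, T *ᵥ btil = w := ⟨_, rfl⟩
  obtain ⟨q, hq⟩ : ∃ q : ℝ, btil ⬝ᵥ (T *ᵥ btil) = q := ⟨_, rfl⟩
  rw [hq] at hmin hσ
  have hsym : ∀ z : Fin d → ℝ, btil ⬝ᵥ (T *ᵥ z) = z ⬝ᵥ w := by
    intro z
    rw [dotProduct_mulVec, ← Matrix.mulVec_transpose, hTsymm, hw]
    exact dotProduct_comm _ _
  have hexp : ∀ (t : ℝ) (z : Fin d → ℝ), (btil + t • z) ⬝ᵥ (T *ᵥ (btil + t • z)) =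
      q + 2 * t * (z ⬝ᵥ w) + t ^ 2 * (z ⬝ᵥ (T *ᵥ z)) := by
    intro t z
    rw [Matrix.mulVec_add, Matrix.mulVec_smul, add_dotProduct, smul_dotProduct,
      dotProduct_add, dotProduct_add, dotProduct_smul, dotProduct_smul, hsym z, hq, hw]
    simp only [smul_eq_mul]
    ring
  have hdiag : ∀ i : Fin d, 0 < (Pi.single i 1 : Fin d → ℝ) ⬝ᵥ (T *ᵥ Pi.single i 1) := by
    intro i
    refine hTpos _ ?_
    intro h
    have := congrFun h i
    simp at this
  -- w is nonnegative
  have hwnonneg : ∀ i, 0 ≤ w i := by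
    intro i
    by_contra hneg
    push_neg at hneg
    obtain ⟨c, hc⟩ : ∃ c, (Pi.single i 1 : Fin d → ℝ) ⬝ᵥ (T *ᵥ Pi.single i 1) = c := ⟨_, rfl⟩
    have hc0 : 0 < c := hc ▸ hdiag i
    set t : ℝ := -w i / c with ht
    have ht0 : 0 < t := div_pos (by linarith) hc0
    have hfeas : ∀ j, b j ≤ (btil + t • (Pi.single i 1 : Fin d → ℝ)) j := by
      intro j
      have h0 : (0:ℝ) ≤ t • (Pi.single i 1 : Fin d → ℝ) j := by
        rcases eq_or_ne j i with rfl | hji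
        · simp [ht0.le]
        · simp [Pi.single_eq_of_ne hji]
      calc b j ≤ btil j := hble j
        _ ≤ btil j + t • (Pi.single i 1 : Fin d → ℝ) j := le_add_of_nonneg_right h0
        _ = (btil + t • (Pi.single i 1 : Fin d → ℝ)) j := rfl
    have hkey := hmin _ hfeas
    rw [hexp t (Pi.single i 1), hc, single_dotProduct, one_mul] at hkey
    have htc : t * c = -w i := by rw [ht]; field_simp
    have ht2 : t ^ 2 * c = t * (-w i) := by rw [pow_two, mul_assoc, htc]
    nlinarith [mul_pos ht0 (neg_pos.mpr hneg)]
  -- complementary slackness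
  have hslack : ∀ i, b i < btil i → w i = 0 := by
    intro i hbi
    by_contra hne
    have hwi : 0 < w i := lt_of_le_of_ne (hwnonneg i) (Ne.symm hne)
    obtain ⟨c, hc⟩ : ∃ c, (Pi.single i 1 : Fin d → ℝ) ⬝ᵥ (T *ᵥ Pi.single i 1) = c := ⟨_, rfl⟩
    have hc0 : 0 < c := hc ▸ hdiag i
    set t : ℝ := min (btil i - b i) (w i / c) with ht
    have ht0 : 0 < t := lt_min (by linarith) (div_pos hwi hc0)
    have hfeas : ∀ j, b j ≤ (btil + (-t) • (Pi.single i 1 : Fin d → ℝ)) j := by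
      intro j
      rcases eq_or_ne j i with rfl | hji
      · have hle : t ≤ btil j - b j := min_le_left _ _
        simp only [Pi.add_apply, Pi.smul_apply, Pi.single_eq_same, smul_eq_mul, mul_one]
        linarith
      · simp [Pi.single_eq_of_ne hji, hble j]
    have hkey := hmin _ hfeas
    rw [hexp (-t) (Pi.single i 1), hc, single_dotProduct, one_mul] at hkey
    have htc : t * c ≤ w i := by
      have hle : t ≤ w i / c := min_le_right _ _
      calc t * c ≤ (w i / c) * c := by nlinarith
        _ = w i := div_mul_cancel₀ _ hc0.ne'
    nlinarith [mul_pos ht0 hwi, mul_le_mul_of_nonneg_left htc ht0.le]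
  -- w ⬝ᵥ b = q
  have hwb : w ⬝ᵥ b = q := by
    have h1 : w ⬝ᵥ b = w ⬝ᵥ btil := by
      simp only [dotProduct]
      refine Finset.sum_congr rfl fun i _ => ?_
      rcases lt_or_eq_of_le (hble i) with h | h
      · rw [hslack i h]; ring
      · rw [h]
    rw [h1, dotProduct_comm, ← hw, hq]
  -- q > 0
  have hq0 : 0 < q := by
    obtain ⟨i, hbi⟩ := hb
    rw [← hq]
    refine hTpos btil ?_
    intro h
    have h2 := congrFun h i
    simp only [Pi.zero_apply] at h2
    have := hble i
    linarith
  -- variance of w ⬝ᵥ N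
  have hvar : w ⬝ᵥ (S *ᵥ w) = q := by
    have hdet : IsUnit S.det := isUnit_iff_ne_zero.mpr hS.det_pos.ne'
    have hSw : S *ᵥ w = btil := by
      rw [← hw, Matrix.mulVec_mulVec, ← hT, Matrix.mul_nonsing_inv S hdet, Matrix.one_mulVec]
    rw [hSw, dotProduct_comm, ← hq, hsym btil, dotProduct_comm]
  -- exists positive coordinate of w
  have hwex : ∃ i, 0 < w i := by
    by_contra h
    push_neg at h
    have hz : ∀ i, w i = 0 := fun i => le_antisymm (h i) (hwnonneg i)
    have hw0 : w ⬝ᵥ b = 0 := by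
      simp only [dotProduct]
      exact Finset.sum_eq_zero fun i _ => by rw [hz i, zero_mul]
    rw [hwb] at hw0; linarith
  -- event inclusion
  have hincl : {ω | ∀ i, u * b i < N ω i} ⊆ {ω | u * q < w ⬝ᵥ N ω} := by
    intro ω hω
    simp only [Set.mem_setOf_eq] at hω ⊢
    have huq : u * q = w ⬝ᵥ (u • b) := by
      rw [dotProduct_smul, hwb]; simp [mul_comm]
    rw [huq]
    simp only [dotProduct]
    obtain ⟨i0, hi0⟩ := hwex
    refine Finset.sum_lt_sum (fun i _ => ?_) ⟨i0, Finset.mem_univ i0, ?_⟩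
    · have h1 := hω i
      have h2 := hwnonneg i
      simp only [Pi.smul_apply, smul_eq_mul]
      nlinarith
    · have h1 := hω i0
      simp only [Pi.smul_apply, smul_eq_mul]
      nlinarith
  have hfmeas : Measurable fun ω => w ⬝ᵥ N ω := by
    simp only [dotProduct]
    exact Finset.measurable_sum _ fun i _ =>
      (measurable_const.mul ((measurable_pi_apply i).comp hmeas))
  have hmap : P {ω | u * q < w ⬝ᵥ N ω} =
      (ProbabilityTheory.gaussianReal 0 (w ⬝ᵥ (S *ᵥ w)).toNNReal) (Set.Ioi (u * q)) := by
    rw [← hGauss w, Measure.map_apply hfmeas measurableSet_Ioi]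
    rfl
  have hqnn : (q.toNNReal : ℝ) = q := Real.coe_toNNReal q hq0.le
  have hqnn0 : q.toNNReal ≠ 0 := by
    intro h
    rw [← hqnn, h] at hq0
    simp at hq0
  have htail := gaussian_tail_aux q.toNNReal hqnn0 (u * q) (by positivity)
  have hbound : (P {ω | u * q < w ⬝ᵥ N ω}).toReal ≤ Real.exp (-(u ^ 2) / (2 * σb2)) := by
    rw [hmap, hvar]
    refine htail.trans_eq ?_
    rw [hqnn, hσ]
    have hQ : q ≠ 0 := hq0.ne'
    field_simp
  refine le_trans ?_ hbound
  exact ENNReal.toReal_mono (measure_ne_top _ _) (measure_mono hincl)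
end

section
/- Let H be a d×d real matrix whose eigenvalues all have positive real part, and let Σ be a symmetric positive definite d×d matrix such that y^⊤ H Σ y > 0 for all nonzero y ∈ ℝ^d. Define for t ∈ (0,1] the function σ^2(t) = 1 / min_{x ≥ b} x^⊤ (t^H Σ t^{H^⊤})^{-1} x, where b ∈ ℝ^d has at least one positive component and t^H = exp(H log t). Then the derivative-based first-order expansion gives σ^2(s) − σ^2(t) > 0 for t < s near any s ∈ (0,1], i.e., σ^2 is strictly increasing on (0,1], provided the quadratic programming solution map is (locally Lipschitz) continuous in t. -/
open Matrix Set

lemma aux_lemC_15 {d : ℕ} (K : Matrix (Fin d) (Fin d) ℝ) (z : Fin d → ℝ) :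
    z ⬝ᵥ (Kᵀ *ᵥ z) = z ⬝ᵥ (K *ᵥ z) := by
  rw [Matrix.mulVec_transpose, dotProduct_comm]
  exact (Matrix.dotProduct_mulVec z K z).symm

lemma aux_lemA_15 {d : ℕ} (M N : Matrix (Fin d) (Fin d) ℝ) (z : Fin d → ℝ) :
    (Mᵀ *ᵥ z) ⬝ᵥ (N *ᵥ z) = z ⬝ᵥ ((M * N) *ᵥ z) := by
  rw [Matrix.mulVec_transpose, ← Matrix.mulVec_mulVec]
  exact (Matrix.dotProduct_mulVec z M (N *ᵥ z)).symm

open NormedSpace in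
/-- Core monotonicity: `u ↦ (exp(u•Hᵀ) y)ᵀ S (exp(u•Hᵀ) y)` is strictly increasing. -/
lemma aux_strictMono_15 {d : ℕ} (H S : Matrix (Fin d) (Fin d) ℝ)
    (hSsymm : S.IsSymm)
    (hHS : ∀ y : Fin d → ℝ, y ≠ 0 → 0 < y ⬝ᵥ ((H * S) *ᵥ y))
    (y : Fin d → ℝ) (hy : y ≠ 0) :
    StrictMono (fun u : ℝ =>
      (exp (u • Hᵀ) *ᵥ y) ⬝ᵥ (S *ᵥ (exp (u • Hᵀ) *ᵥ y))) := by
  letI : SeminormedRing (Matrix (Fin d) (Fin d) ℝ) := Matrix.linftyOpSemiNormedRing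
  letI : NormedRing (Matrix (Fin d) (Fin d) ℝ) := Matrix.linftyOpNormedRing
  letI : NormedAlgebra ℝ (Matrix (Fin d) (Fin d) ℝ) := Matrix.linftyOpNormedAlgebra
  set A := Hᵀ with hA
  set g : ℝ → Fin d → ℝ := fun u => exp (u • A) *ᵥ y with hgdef
  -- g u ≠ 0
  have hgne : ∀ u, g u ≠ 0 := by
    intro u hg0
    apply hy
    have hcomm : Commute (-(u • A)) (u • A) := (Commute.refl (u • A)).neg_left
    have h1 : exp (-(u • A)) * exp (u • A) = 1 := by
      rw [← Matrix.exp_add_of_commute _ _ hcomm, neg_add_cancel, NormedSpace.exp_zero]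
    calc y = (exp (-(u • A)) * exp (u • A)) *ᵥ y := by rw [h1, Matrix.one_mulVec]
      _ = exp (-(u • A)) *ᵥ g u := by rw [← Matrix.mulVec_mulVec]
      _ = 0 := by rw [hg0, Matrix.mulVec_zero]
  -- derivative of g
  have hg : ∀ u, HasDerivAt g (A *ᵥ g u) u := by
    intro u
    have h1 : HasDerivAt (fun v : ℝ => exp (v • A)) (A * exp (u • A)) u :=
      hasDerivAt_exp_smul_const' (𝕂 := ℝ) A u
    let L : Matrix (Fin d) (Fin d) ℝ →ₗ[ℝ] (Fin d → ℝ) :=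
      { toFun := fun M => M *ᵥ y
        map_add' := fun M N => Matrix.add_mulVec M N y
        map_smul' := fun c M => Matrix.smul_mulVec c M y }
    have h2 := (L.toContinuousLinearMap.hasFDerivAt (x := exp (u • A))).comp_hasDerivAt u h1
    have h3 : A *ᵥ g u = L.toContinuousLinearMap (A * exp (u • A)) := by
      simp [L, hgdef, Matrix.mulVec_mulVec, LinearMap.coe_toContinuousLinearMap']
    rw [h3]
    exact h2
  -- derivative of F
  set F : ℝ → ℝ := fun u => g u ⬝ᵥ (S *ᵥ g u) with hFdef
  have hF : ∀ u, HasDerivAt F (2 * (g u ⬝ᵥ ((H * S) *ᵥ g u))) u := by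
    intro u
    have hgc : ∀ i, HasDerivAt (fun v => g v i) ((A *ᵥ g u) i) u := by
      intro i
      have := ((ContinuousLinearMap.proj (R := ℝ) (φ := fun _ : Fin d => ℝ)
        i).hasFDerivAt (x := g u)).comp_hasDerivAt u (hg u)
      exact this
    have hsum : HasDerivAt (fun v => ∑ i, ∑ j, g v i * (S i j * g v j))
        (∑ i, ∑ j, ((A *ᵥ g u) i * (S i j * g u j) + g u i * (S i j * (A *ᵥ g u) j))) u := by
      apply HasDerivAt.fun_sum
      intro i _
      apply HasDerivAt.fun_sum
      intro j _
      exact (hgc i).mul ((hgc j).const_mul (S i j))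
    have hFeq : F = fun v => ∑ i, ∑ j, g v i * (S i j * g v j) := by
      funext v
      simp [hFdef, dotProduct, Matrix.mulVec, Finset.mul_sum]
    rw [hFeq]
    convert hsum using 1
    -- identify the derivative value
    have e1 : (∑ i, ∑ j, (A *ᵥ g u) i * (S i j * g u j)) = (A *ᵥ g u) ⬝ᵥ (S *ᵥ g u) := by
      simp [dotProduct, Matrix.mulVec, Finset.mul_sum]
    have e2 : (∑ i, ∑ j, g u i * (S i j * (A *ᵥ g u) j)) = g u ⬝ᵥ (S *ᵥ (A *ᵥ g u)) := by
      simp [dotProduct, Matrix.mulVec, Finset.mul_sum]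
    have e3 : (A *ᵥ g u) ⬝ᵥ (S *ᵥ g u) = g u ⬝ᵥ ((H * S) *ᵥ g u) := by
      rw [hA]; exact aux_lemA_15 H S (g u)
    have e4 : g u ⬝ᵥ (S *ᵥ (A *ᵥ g u)) = g u ⬝ᵥ ((H * S) *ᵥ g u) := by
      rw [hA, Matrix.mulVec_mulVec]
      have hSH : S * Hᵀ = (H * S)ᵀ := by
        rw [Matrix.transpose_mul, hSsymm.eq]
      rw [hSH]
      exact aux_lemC_15 (H * S) (g u)
    rw [show (∑ i, ∑ j, ((A *ᵥ g u) i * (S i j * g u j) + g u i * (S i j * (A *ᵥ g u) j)))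
        = (∑ i, ∑ j, (A *ᵥ g u) i * (S i j * g u j))
          + ∑ i, ∑ j, g u i * (S i j * (A *ᵥ g u) j) from by
      rw [← Finset.sum_add_distrib]
      exact Finset.sum_congr rfl fun i _ => Finset.sum_add_distrib]
    rw [e1, e2, e3, e4]
    ring
  have hpos : ∀ u, 0 < deriv F u := by
    intro u
    rw [(hF u).deriv]
    have := hHS (g u) (hgne u)
    linarith
  exact strictMono_of_deriv_pos hpos

/-- For an operator fBm covariance `Σ(t) = t^H Σ t^{Hᵀ}` with `t^H = exp(H log t)`,
if every eigenvalue of `H` has positive real part and `yᵀ H Σ y > 0` for all `y ≠ 0`,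
then the generalized variance function `σ²(t) = 1/min_{x ≥ b} xᵀ Σ(t)⁻¹ x` is strictly
increasing on `(0,1]`, provided the quadratic-programming solution map `t ↦ sol t` is
continuous on `(0,1]`. -/
theorem stmt_15 (d : ℕ) (H S : Matrix (Fin d) (Fin d) ℝ)
    (hS : S.PosDef) (hSsymm : S.IsSymm)
    (heig : ∀ μ : ℂ, μ ∈ spectrum ℂ (H.map (Complex.ofReal : ℝ → ℂ)) → 0 < μ.re)
    (hHS : ∀ y : Fin d → ℝ, y ≠ 0 → 0 < y ⬝ᵥ ((H * S) *ᵥ y))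
    (b : Fin d → ℝ) (hb : ∃ i, 0 < b i)
    (St : ℝ → Matrix (Fin d) (Fin d) ℝ)
    (hSt : ∀ t, St t = (NormedSpace.exp (Real.log t • H)) * S * (NormedSpace.exp (Real.log t • H))ᵀ)
    (sol : ℝ → Fin d → ℝ)
    (hsolcont : ContinuousOn sol (Ioc (0:ℝ) 1))
    (hsolmin : ∀ t ∈ Ioc (0:ℝ) 1, (∀ i, b i ≤ sol t i) ∧
      ∀ y : Fin d → ℝ, (∀ i, b i ≤ y i) →
        sol t ⬝ᵥ ((St t)⁻¹ *ᵥ sol t) ≤ y ⬝ᵥ ((St t)⁻¹ *ᵥ y)) :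
    StrictMonoOn (fun t => 1 / (sol t ⬝ᵥ ((St t)⁻¹ *ᵥ sol t))) (Ioc (0:ℝ) 1) := by
  -- quadratic form of St t equals F_y (log t)
  have hquad : ∀ (t : ℝ) (y : Fin d → ℝ),
      y ⬝ᵥ (St t *ᵥ y) =
        (NormedSpace.exp (Real.log t • Hᵀ) *ᵥ y) ⬝ᵥ
          (S *ᵥ (NormedSpace.exp (Real.log t • Hᵀ) *ᵥ y)) := by
    intro t y
    rw [hSt t]
    have hTrans : (NormedSpace.exp (Real.log t • H))ᵀ
        = NormedSpace.exp (Real.log t • Hᵀ) := by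
      rw [← Matrix.exp_transpose, Matrix.transpose_smul]
    rw [hTrans, ← Matrix.mulVec_mulVec, ← Matrix.mulVec_mulVec,
      Matrix.dotProduct_mulVec (v := y), ← Matrix.mulVec_transpose, hTrans]
  -- strict monotonicity in t of quadratic forms
  have hmono : ∀ (y : Fin d → ℝ), y ≠ 0 → ∀ t s : ℝ, 0 < t → t < s →
      y ⬝ᵥ (St t *ᵥ y) < y ⬝ᵥ (St s *ᵥ y) := by
    intro y hy t s ht hts
    rw [hquad, hquad]
    exact aux_strictMono_15 H S hSsymm hHS y hy
      (Real.log_lt_log ht hts)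
  -- St t is positive definite for t > 0
  have hStPD : ∀ t : ℝ, (St t).PosDef := by
    intro t
    rw [Matrix.posDef_iff_dotProduct_mulVec]
    constructor
    · show (St t)ᴴ = St t
      rw [Matrix.conjTranspose_eq_transpose_of_trivial, hSt t]
      rw [Matrix.transpose_mul, Matrix.transpose_mul, Matrix.transpose_transpose,
        hSsymm.eq, Matrix.mul_assoc]
    · intro y hy
      have h := hquad t y
      have hg : NormedSpace.exp (Real.log t • Hᵀ) *ᵥ y ≠ 0 := by
        intro h0
        apply hy
        letI : SeminormedRing (Matrix (Fin d) (Fin d) ℝ) := Matrix.linftyOpSemiNormedRing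
        letI : NormedRing (Matrix (Fin d) (Fin d) ℝ) := Matrix.linftyOpNormedRing
        letI : NormedAlgebra ℝ (Matrix (Fin d) (Fin d) ℝ) := Matrix.linftyOpNormedAlgebra
        have hcomm : Commute (-(Real.log t • Hᵀ)) (Real.log t • Hᵀ) :=
          (Commute.refl _).neg_left
        have h1 : NormedSpace.exp (-(Real.log t • Hᵀ)) *
            NormedSpace.exp (Real.log t • Hᵀ) = 1 := by
          rw [← Matrix.exp_add_of_commute _ _ hcomm, neg_add_cancel, NormedSpace.exp_zero]
        calc y = (NormedSpace.exp (-(Real.log t • Hᵀ)) *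
              NormedSpace.exp (Real.log t • Hᵀ)) *ᵥ y := by rw [h1, Matrix.one_mulVec]
          _ = NormedSpace.exp (-(Real.log t • Hᵀ)) *ᵥ
              (NormedSpace.exp (Real.log t • Hᵀ) *ᵥ y) := by rw [← Matrix.mulVec_mulVec]
          _ = 0 := by rw [h0, Matrix.mulVec_zero]
      have := hS.dotProduct_mulVec_pos hg
      simpa [h] using this
  intro t ht s hs hts
  obtain ⟨i, hbi⟩ := hb
  have hsolt := hsolmin t ht
  have hsols := hsolmin s hs
  have hsoltne : sol t ≠ 0 := by
    intro h0
    have := hsolt.1 i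
    rw [h0] at this
    simp at this
    linarith
  have hsolsne : sol s ≠ 0 := by
    intro h0
    have := hsols.1 i
    rw [h0] at this
    simp at this
    linarith
  -- invertibility facts
  have hdet : ∀ r : ℝ, IsUnit (St r).det := fun r => (hStPD r).det_pos.ne'.isUnit
  have hmulinv : ∀ r : ℝ, St r * (St r)⁻¹ = 1 := fun r => Matrix.mul_nonsing_inv _ (hdet r)
  have hSymmSt : ∀ r : ℝ, (St r)ᵀ = St r := fun r => (hStPD r).1
  -- key: for nonzero v, v ⬝ᵥ (St s)⁻¹ v < v ⬝ᵥ (St t)⁻¹ v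
  have hkey : ∀ v : Fin d → ℝ, v ≠ 0 →
      v ⬝ᵥ ((St s)⁻¹ *ᵥ v) < v ⬝ᵥ ((St t)⁻¹ *ᵥ v) := by
    intro v hv
    set w := (St s)⁻¹ *ᵥ v with hw
    set wt := (St t)⁻¹ *ᵥ v with hwt
    have hStw : St s *ᵥ w = v := by
      rw [hw, Matrix.mulVec_mulVec, hmulinv s, Matrix.one_mulVec]
    have hStwt : St t *ᵥ wt = v := by
      rw [hwt, Matrix.mulVec_mulVec, hmulinv t, Matrix.one_mulVec]
    have hwne : w ≠ 0 := by
      intro h0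
      apply hv
      rw [← hStw, h0, Matrix.mulVec_zero]
    -- v ⬝ (St s)⁻¹ v = 2 w⬝v − w⬝(St s w)
    have eq1 : v ⬝ᵥ ((St s)⁻¹ *ᵥ v) = 2 * (w ⬝ᵥ v) - w ⬝ᵥ (St s *ᵥ w) := by
      rw [hStw, ← hw, dotProduct_comm]
      ring
    have lt1 : 2 * (w ⬝ᵥ v) - w ⬝ᵥ (St s *ᵥ w) < 2 * (w ⬝ᵥ v) - w ⬝ᵥ (St t *ᵥ w) := by
      have := hmono w hwne t s ht.1 hts
      linarith
    -- 2 w⬝v − w⬝(St t w) ≤ v ⬝ (St t)⁻¹ v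
    have le2 : 2 * (w ⬝ᵥ v) - w ⬝ᵥ (St t *ᵥ w) ≤ v ⬝ᵥ ((St t)⁻¹ *ᵥ v) := by
      have hexp : (wt - w) ⬝ᵥ (St t *ᵥ (wt - w)) =
          v ⬝ᵥ ((St t)⁻¹ *ᵥ v) - 2 * (w ⬝ᵥ v) + w ⬝ᵥ (St t *ᵥ w) := by
        have hsym : ∀ x z : Fin d → ℝ, x ⬝ᵥ (St t *ᵥ z) = z ⬝ᵥ (St t *ᵥ x) := by
          intro x z
          rw [Matrix.dotProduct_mulVec, ← Matrix.mulVec_transpose, hSymmSt,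
            dotProduct_comm]
        rw [sub_dotProduct, Matrix.mulVec_sub, dotProduct_sub,
          dotProduct_sub]
        have h1 : wt ⬝ᵥ (St t *ᵥ wt) = v ⬝ᵥ ((St t)⁻¹ *ᵥ v) := by
          rw [hStwt, ← hwt, dotProduct_comm]
        have h2 : wt ⬝ᵥ (St t *ᵥ w) = w ⬝ᵥ v := by
          rw [hsym, hStwt]
        have h3 : w ⬝ᵥ (St t *ᵥ wt) = w ⬝ᵥ v := by rw [hStwt]
        rw [h1, h2, h3]
        ring
      have hge : 0 ≤ (wt - w) ⬝ᵥ (St t *ᵥ (wt - w)) := by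
        have := (hStPD t).posSemidef.dotProduct_mulVec_nonneg (wt - w)
        simpa using this
      linarith
    calc v ⬝ᵥ ((St s)⁻¹ *ᵥ v) = 2 * (w ⬝ᵥ v) - w ⬝ᵥ (St s *ᵥ w) := eq1
      _ < 2 * (w ⬝ᵥ v) - w ⬝ᵥ (St t *ᵥ w) := lt1
      _ ≤ v ⬝ᵥ ((St t)⁻¹ *ᵥ v) := le2
  -- positivity of Q s
  have hQspos : 0 < sol s ⬝ᵥ ((St s)⁻¹ *ᵥ sol s) := by
    have hinvPD : ((St s)⁻¹).PosDef := (hStPD s).inv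
    have := hinvPD.dotProduct_mulVec_pos hsolsne
    simpa using this
  -- chain: Q s ≤ sol t form at s < Q t
  have hQlt : sol s ⬝ᵥ ((St s)⁻¹ *ᵥ sol s) < sol t ⬝ᵥ ((St t)⁻¹ *ᵥ sol t) :=
    lt_of_le_of_lt (hsols.2 (sol t) hsolt.1) (hkey (sol t) hsoltne)
  exact one_div_lt_one_div_of_lt hQspos hQlt
end
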